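/- Two Banach spaces X and Y are essentially incomparable if and only if every pair of bounded operators U ∈ B(X), V ∈ B(Y) that are Schur coupled consists of Fredholm operators. -/

import Mathlib

open ContinuousLinearMap

variable {X Y : Type*} [NormedAddCommGroup X] [NormedSpace ℂ X]
  [NormedAddCommGroup Y] [NormedSpace ℂ Y]

/-- A bounded operator is *Fredholm* if it has finite dimensional kernel and
closed range of finite codimension. -/
def IsFredholm (T : X →L[ℂ] Y) : Prop :=
  FiniteDimensional ℂ (LinearMap.ker (T : X →ₗ[ℂ] Y)) ∧ IsClosed (LinearMap.range (T : X →ₗ[ℂ] Y) : Set Y) ∧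
    FiniteDimensional ℂ (Y ⧸ LinearMap.range (T : X →ₗ[ℂ] Y))

/-- The Fredholm index `dim ker − dim coker`. -/
noncomputable def fredholmIndex (T : X →L[ℂ] Y) : ℤ :=
  (Module.finrank ℂ (LinearMap.ker (T : X →ₗ[ℂ] Y)) : ℤ) - (Module.finrank ℂ (Y ⧸ LinearMap.range (T : X →ₗ[ℂ] Y)) : ℤ)

/-- `S : X → Y` is *inessential* if `I_X − T S` is Fredholm for every bounded `T : Y → X`. -/
def Inessential (S : X →L[ℂ] Y) : Prop :=
  ∀ T : Y →L[ℂ] X, _root_.IsFredholm (ContinuousLinearMap.id ℂ X - T ∘L S)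

/-- Banach spaces `X`, `Y` are *essentially incomparable* if every bounded operator
`X → Y` is inessential. -/
def EssentiallyIncomparable (X Y : Type*) [NormedAddCommGroup X] [NormedSpace ℂ X]
    [NormedAddCommGroup Y] [NormedSpace ℂ Y] : Prop :=
  ∀ S : X →L[ℂ] Y, Inessential S

/-- `U` and `V` are *Schur coupled* if they arise as the two Schur complements of a
`2 × 2` block operator on `X × Y` with invertible diagonal entries. -/
def SchurCoupled (U : X →L[ℂ] X) (V : Y →L[ℂ] Y) : Prop :=
  ∃ (A : X ≃L[ℂ] X) (D : Y ≃L[ℂ] Y) (B : Y →L[ℂ] X) (C : X →L[ℂ] Y),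
    U = (A : X →L[ℂ] X) - B ∘L (D.symm : Y →L[ℂ] Y) ∘L C ∧
    V = (D : Y →L[ℂ] Y) - C ∘L (A.symm : X →L[ℂ] X) ∘L B

section Aux

set_option linter.unusedSectionVars false

/-- A bounded operator between Banach spaces whose range has finite codimension has
closed range. -/
lemma isClosed_range_of_finiteCodim {X Y : Type*} [NormedAddCommGroup X] [NormedSpace ℂ X]
    [CompleteSpace X] [NormedAddCommGroup Y] [NormedSpace ℂ Y] [CompleteSpace Y]
    (T : X →L[ℂ] Y) (h : FiniteDimensional ℂ (Y ⧸ LinearMap.range (T : X →ₗ[ℂ] Y))) :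
    IsClosed (LinearMap.range (T : X →ₗ[ℂ] Y) : Set Y) := by
  set p := LinearMap.range (T : X →ₗ[ℂ] Y) with hp
  obtain ⟨F, hF⟩ := Submodule.exists_isCompl p
  have hFfin : FiniteDimensional ℂ F :=
    Module.Finite.equiv (Submodule.quotientEquivOfIsCompl p F hF)
  haveI : CompleteSpace F := FiniteDimensional.complete ℂ F
  set Φ : X × F →L[ℂ] Y := (T ∘L fst ℂ X F) + (F.subtypeL ∘L snd ℂ X F) with hΦ
  have hΦapply : ∀ z : X × F, Φ z = T z.1 + (z.2 : Y) := fun z => rfl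
  have hsurj : Function.Surjective Φ := by
    intro y
    have : y ∈ p ⊔ F := by rw [hF.sup_eq_top]; trivial
    obtain ⟨u, hu, f, hf, huf⟩ := Submodule.mem_sup.mp this
    obtain ⟨x, hx⟩ := hu
    exact ⟨(x, ⟨f, hf⟩), by simp [hΦapply, ← huf, ← hx]⟩
  have hpre : Φ ⁻¹' (p : Set Y) = (LinearMap.ker ((F.subtypeL ∘L snd ℂ X F : X × F →L[ℂ] Y) : X × F →ₗ[ℂ] Y) : Set (X × F)) := by
    ext z
    simp only [Set.mem_preimage, SetLike.mem_coe, LinearMap.mem_ker, hΦapply]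
    constructor
    · intro hz
      have hz2 : (z.2 : Y) ∈ p ⊓ F := by
        constructor
        · have : (z.2 : Y) = (T z.1 + (z.2 : Y)) - T z.1 := by abel
          rw [this]
          exact Submodule.sub_mem p hz (LinearMap.mem_range_self _ _)
        · exact z.2.2
      rw [hF.inf_eq_bot] at hz2
      exact hz2
    · intro hz
      have h0 : (z.2 : Y) = 0 := hz
      rw [h0, add_zero, hp]
      exact LinearMap.mem_range_self (T : X →ₗ[ℂ] Y) z.1
  have hclosed : IsClosed (Φ ⁻¹' (p : Set Y)) := by
    rw [hpre]; exact ContinuousLinearMap.isClosed_ker _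
  exact (Φ.isQuotientMap hsurj).isClosed_preimage.mp hclosed

variable {X Y : Type*} [NormedAddCommGroup X] [NormedSpace ℂ X] [CompleteSpace X]
  [NormedAddCommGroup Y] [NormedSpace ℂ Y] [CompleteSpace Y]

/-- If `1 - T S` is Fredholm then so is `1 - S T`. -/
lemma isFredholm_swap (S : X →L[ℂ] Y) (T : Y →L[ℂ] X)
    (h : _root_.IsFredholm (ContinuousLinearMap.id ℂ X - T ∘L S)) :
    _root_.IsFredholm (ContinuousLinearMap.id ℂ Y - S ∘L T) := by
  obtain ⟨hker, -, hcoker⟩ := h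
  set P := ContinuousLinearMap.id ℂ X - T ∘L S with hP
  set Q := ContinuousLinearMap.id ℂ Y - S ∘L T with hQ
  have hPapply : ∀ x, P x = x - T (S x) := fun x => rfl
  have hQapply : ∀ y, Q y = y - S (T y) := fun y => rfl
  have hmapsto : ∀ y ∈ LinearMap.ker (Q : Y →ₗ[ℂ] Y), T y ∈ LinearMap.ker (P : X →ₗ[ℂ] X) := by
    intro y hy
    have hy' : y - S (T y) = 0 := hy
    have : P (T y) = T (y - S (T y)) := by
      rw [hPapply, map_sub]
    rw [LinearMap.mem_ker]
    rw [ContinuousLinearMap.coe_coe, this, hy', map_zero]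
  let f : LinearMap.ker (Q : Y →ₗ[ℂ] Y) →ₗ[ℂ] LinearMap.ker (P : X →ₗ[ℂ] X) :=
    LinearMap.restrict (T : Y →ₗ[ℂ] X) hmapsto
  have hfinj : Function.Injective f := by
    intro y₁ y₂ hy
    have h1 : T (y₁ : Y) = T (y₂ : Y) := congrArg Subtype.val hy
    have e1 : (y₁ : Y) - S (T (y₁ : Y)) = 0 := y₁.2
    have e2 : (y₂ : Y) - S (T (y₂ : Y)) = 0 := y₂.2
    apply Subtype.ext
    have : (y₁ : Y) = S (T (y₁ : Y)) := by
      rw [sub_eq_zero] at e1; exact e1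
    have h2 : (y₂ : Y) = S (T (y₂ : Y)) := by
      rw [sub_eq_zero] at e2; exact e2
    rw [this, h2, h1]
  have hkQ : FiniteDimensional ℂ (LinearMap.ker (Q : Y →ₗ[ℂ] Y)) :=
    FiniteDimensional.of_injective f hfinj
  have hle : LinearMap.range (P : X →ₗ[ℂ] X) ≤
      LinearMap.ker ((LinearMap.range (Q : Y →ₗ[ℂ] Y)).mkQ.comp (S : X →ₗ[ℂ] Y)) := by
    rintro x ⟨x₀, rfl⟩
    rw [LinearMap.mem_ker]
    have : S (P x₀) = Q (S x₀) := by
      rw [hPapply, hQapply, map_sub]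
    simp only [LinearMap.comp_apply]
    rw [ContinuousLinearMap.coe_coe, ContinuousLinearMap.coe_coe, this]
    rw [Submodule.mkQ_apply, Submodule.Quotient.mk_eq_zero]
    exact LinearMap.mem_range_self _ _
  let g : (X ⧸ LinearMap.range (P : X →ₗ[ℂ] X)) →ₗ[ℂ] (Y ⧸ LinearMap.range (Q : Y →ₗ[ℂ] Y)) :=
    Submodule.liftQ _ ((LinearMap.range (Q : Y →ₗ[ℂ] Y)).mkQ.comp (S : X →ₗ[ℂ] Y)) hle
  have hgsurj : Function.Surjective g := by
    intro z
    obtain ⟨y, rfl⟩ := Submodule.Quotient.mk_surjective _ z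
    refine ⟨Submodule.Quotient.mk (T y), ?_⟩
    show Submodule.Quotient.mk (S (T y)) = Submodule.Quotient.mk y
    rw [Submodule.Quotient.eq]
    have : S (T y) - y = -(Q y) := by rw [hQapply]; abel
    rw [this]
    exact Submodule.neg_mem _ (LinearMap.mem_range_self _ _)
  have hcQ : FiniteDimensional ℂ (Y ⧸ LinearMap.range (Q : Y →ₗ[ℂ] Y)) :=
    Module.Finite.of_surjective g hgsurj
  exact ⟨hkQ, isClosed_range_of_finiteCodim Q hcQ, hcQ⟩

/-- Fredholmness is stable under left composition with an invertible operator. -/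
lemma isFredholm_equiv_comp (e : X ≃L[ℂ] X) (T : X →L[ℂ] X) (h : _root_.IsFredholm T) :
    _root_.IsFredholm ((e : X →L[ℂ] X) ∘L T) := by
  obtain ⟨hker, -, hcoker⟩ := h
  have hk : LinearMap.ker (((e : X →L[ℂ] X) ∘L T : X →L[ℂ] X) : X →ₗ[ℂ] X) = LinearMap.ker (T : X →ₗ[ℂ] X) := by
    ext x
    simp [LinearMap.mem_ker]
  have hr : LinearMap.range (((e : X →L[ℂ] X) ∘L T : X →L[ℂ] X) : X →ₗ[ℂ] X)
      = Submodule.map (e.toLinearEquiv : X →ₗ[ℂ] X) (LinearMap.range (T : X →ₗ[ℂ] X)) := by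
    ext y
    simp only [LinearMap.mem_range, Submodule.mem_map, ContinuousLinearMap.coe_comp',
      Function.comp_apply, ContinuousLinearEquiv.coe_coe, LinearEquiv.coe_coe,
      ContinuousLinearEquiv.coe_toLinearEquiv]
    constructor
    · rintro ⟨x, rfl⟩; exact ⟨T x, ⟨x, rfl⟩, rfl⟩
    · rintro ⟨u, ⟨x, rfl⟩, rfl⟩; exact ⟨x, rfl⟩
  have hcfin : FiniteDimensional ℂ (X ⧸ LinearMap.range (((e : X →L[ℂ] X) ∘L T : X →L[ℂ] X) : X →ₗ[ℂ] X)) := by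
    rw [hr]
    exact Module.Finite.equiv
      (Submodule.Quotient.equiv (LinearMap.range (T : X →ₗ[ℂ] X)) _ e.toLinearEquiv rfl)
  refine ⟨?_, isClosed_range_of_finiteCodim _ hcfin, hcfin⟩
  rw [hk]; exact hker

end Aux

theorem essIncomparable_iff_schurCoupled_fredholm
    {X Y : Type*} [NormedAddCommGroup X] [NormedSpace ℂ X] [CompleteSpace X]
    [NormedAddCommGroup Y] [NormedSpace ℂ Y] [CompleteSpace Y] :
    EssentiallyIncomparable X Y ↔
      ∀ (U : X →L[ℂ] X) (V : Y →L[ℂ] Y), SchurCoupled U V →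
        _root_.IsFredholm U ∧ _root_.IsFredholm V := by
  constructor
  · rintro hInc U V ⟨A, D, B, C, hU, hV⟩
    constructor
    · have hH : _root_.IsFredholm (ContinuousLinearMap.id ℂ X -
          ((A.symm : X →L[ℂ] X) ∘L (B ∘L (D.symm : Y →L[ℂ] Y))) ∘L C) :=
        hInc C _
      have hUeq : U = (A : X →L[ℂ] X) ∘L (ContinuousLinearMap.id ℂ X -
          ((A.symm : X →L[ℂ] X) ∘L (B ∘L (D.symm : Y →L[ℂ] Y))) ∘L C) := by
        rw [hU]; ext x; simp
      rw [hUeq]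
      exact isFredholm_equiv_comp A _ hH
    · have hH : _root_.IsFredholm (ContinuousLinearMap.id ℂ X -
          ((A.symm : X →L[ℂ] X) ∘L B) ∘L ((D.symm : Y →L[ℂ] Y) ∘L C)) :=
        hInc ((D.symm : Y →L[ℂ] Y) ∘L C) ((A.symm : X →L[ℂ] X) ∘L B)
      have hH' := isFredholm_swap ((D.symm : Y →L[ℂ] Y) ∘L C) ((A.symm : X →L[ℂ] X) ∘L B) hH
      have hVeq : V = (D : Y →L[ℂ] Y) ∘L (ContinuousLinearMap.id ℂ Y -
          ((D.symm : Y →L[ℂ] Y) ∘L C) ∘L ((A.symm : X →L[ℂ] X) ∘L B)) := by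
        rw [hV]; ext y; simp
      rw [hVeq]
      exact isFredholm_equiv_comp D _ hH'
  · intro h S T
    have hsc : SchurCoupled (ContinuousLinearMap.id ℂ X - T ∘L S)
        (ContinuousLinearMap.id ℂ Y - S ∘L T) := by
      refine ⟨ContinuousLinearEquiv.refl ℂ X, ContinuousLinearEquiv.refl ℂ Y, T, S, ?_, ?_⟩
      · ext x; simp
      · ext y; simp
    exact (h _ _ hsc).1
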